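/- Suppose G is a countable group that is the union of a strictly increasing sequence of its finite subgroups {G_i}_{i≥1}. Then there is a proper left-invariant integral ultrametric d_G on G such that every metric space of bounded geometry that has asymptotic dimension 0 coarsely embeds into (G, d_G). -/

import Mathlib

/-- The distance of a metric space is an ultrametric. -/
def IsUltra (X : Type*) [MetricSpace X] : Prop :=
  ∀ x y z : X, dist x z ≤ max (dist x y) (dist y z)

/-- All distances of the metric space are non-negative integers. -/
def IsIntegralDist (X : Type*) [MetricSpace X] : Prop :=
  ∀ x y : X, ∃ n : ℕ, dist x y = n

/-- The metric of the group `G` is left-invariant. -/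
def LeftInvariantDist (G : Type*) [Group G] [MetricSpace G] : Prop :=
  ∀ g x y : G, dist (g * x) (g * y) = dist x y

/-- A metric space has asymptotic dimension `0` if for every `r > 0` the `r`-components of
the space (classes of the chain relation generated by `dist a b < r`) are uniformly
bounded. -/
def AsdimZero (X : Type*) [MetricSpace X] : Prop :=
  ∀ r : ℝ, r > 0 → ∃ B : ℝ, B > 0 ∧ ∀ x y : X,
    Relation.ReflTransGen (fun a b : X => dist a b < r) x y → dist x y ≤ B

/-- A metric space has bounded geometry if there is `ε > 0` such that for every `r > 0` there
is a uniform finite bound on the number of points in a ball of radius `r` that are pairwise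
at distance at least `ε`. -/
def BoundedGeometry (X : Type*) [MetricSpace X] : Prop :=
  ∃ ε : ℝ, ε > 0 ∧ ∀ r : ℝ, r > 0 → ∃ N : ℕ, ∀ (x : X) (F : Finset X),
    (↑F ⊆ Metric.ball x r) → (∀ p ∈ F, ∀ q ∈ F, p ≠ q → ε ≤ dist p q) → F.card ≤ N

/-- `f` is a coarse embedding: uniformly bornologous and uniformly proper. -/
def CoarseEmbedding {X Y : Type*} [MetricSpace X] [MetricSpace Y] (f : X → Y) : Prop :=
  (∀ R : ℝ, R > 0 → ∃ S' : ℝ, S' > 0 ∧ ∀ x y : X, dist x y ≤ R → dist (f x) (f y) ≤ S') ∧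
  (∀ R : ℝ, R > 0 → ∃ S' : ℝ, S' > 0 ∧ ∀ x y : X, dist (f x) (f y) ≤ R → dist x y ≤ S')

lemma finite_and_ncard_le {α : Type*} (A : Set α) (N : ℕ)
    (h : ∀ F : Finset α, ↑F ⊆ A → F.card ≤ N) : A.Finite ∧ A.ncard ≤ N := by
  have hfin : A.Finite := by
    by_contra hinf
    obtain ⟨F, hFA, hFc⟩ := Set.Infinite.exists_subset_card_eq hinf (N + 1)
    have := h F hFA
    omega
  refine ⟨hfin, ?_⟩
  have := h hfin.toFinset (by simp)
  rwa [Set.ncard_eq_toFinset_card A hfin]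

lemma nat_antitone_stab (f : ℕ → ℕ) (h : ∀ n, f (n + 1) ≤ f n) :
    ∃ N, ∀ m, N ≤ m → f m = f N := by
  have hA : Antitone f := antitone_nat_of_succ_le h
  obtain ⟨N, hN⟩ : sInf (Set.range f) ∈ Set.range f := Nat.sInf_mem ⟨f 0, 0, rfl⟩
  exact ⟨N, fun m hm => le_antisymm (hA hm) (hN ▸ Nat.sInf_le ⟨m, rfl⟩)⟩

lemma count_lt_strict (V : Set ℕ) (hV : V.Finite) {a b : ℕ} (ha : a ∈ V) (hb : b ∈ V)
    (hab : a < b) : {v ∈ V | v < a}.ncard < {v ∈ V | v < b}.ncard := by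
  apply Set.ncard_lt_ncard
  · constructor
    · rintro v ⟨hv, hva⟩; exact ⟨hv, lt_trans hva hab⟩
    · intro hsub
      obtain ⟨-, h2⟩ := hsub ⟨ha, hab⟩
      exact lt_irrefl a h2
  · exact hV.subset (Set.sep_subset _ _)

lemma cards_eq {G : Type*} [Group G] (H : Subgroup G) :
    Nat.card ↥H = (H : Set G).ncard := by
  exact Nat.card_coe_set_eq (H : Set G)

lemma exists_coset_reps {G : Type*} [Group G] (H K : Subgroup G) (hHK : H ≤ K)
    (hKfin : (K : Set G).Finite) (c : ℕ) (hc : c * Nat.card H ≤ Nat.card K) :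
    ∃ t : Fin c → G, (∀ a, t a ∈ K) ∧ (∀ a : Fin c, (a : ℕ) = 0 → t a = 1) ∧
      (∀ a b : Fin c, (t a)⁻¹ * t b ∈ H → a = b) := by
  classical
  rcases Nat.eq_zero_or_pos c with hc0 | hcpos
  · subst hc0
    exact ⟨fun a => 1, fun a => a.elim0, fun a => a.elim0, fun a => a.elim0⟩
  haveI hKf : Finite ↥K := hKfin.to_subtype
  haveI hHf : Finite ↥H := (hKfin.subset hHK).to_subtype
  set H' : Subgroup ↥K := H.subgroupOf K with hH'
  have hcardH' : Nat.card H' = Nat.card H :=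
    Nat.card_congr (Subgroup.subgroupOfEquivOfLe hHK).toEquiv
  have hlag : Nat.card ↥K = Nat.card (↥K ⧸ H') * Nat.card H' :=
    Subgroup.card_eq_card_quotient_mul_card_subgroup H'
  have hHpos : 0 < Nat.card H := Nat.card_pos
  have hcq : c ≤ Nat.card (↥K ⧸ H') := by
    have h2 : c * Nat.card ↥H ≤ Nat.card (↥K ⧸ H') * Nat.card ↥H := by
      calc c * Nat.card ↥H ≤ Nat.card ↥K := hc
        _ = Nat.card (↥K ⧸ H') * Nat.card ↥H' := hlag
        _ = Nat.card (↥K ⧸ H') * Nat.card ↥H := by rw [hcardH']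
    exact Nat.le_of_mul_le_mul_right h2 hHpos
  obtain ⟨nq, ⟨eqv⟩⟩ := Finite.exists_equiv_fin (↥K ⧸ H')
  have hnq : Nat.card (↥K ⧸ H') = nq := Nat.card_eq_of_equiv_fin eqv
  have hcnq : c ≤ nq := hnq ▸ hcq
  set s : Fin c → ↥K := fun a => (eqv.symm (Fin.castLE hcnq a)).out with hs
  have hsinj : ∀ a b : Fin c, (QuotientGroup.mk (s a) : ↥K ⧸ H') = (QuotientGroup.mk (s b) : ↥K ⧸ H') → a = b := by
    intro a b hab
    simp only [hs] at hab
    rw [QuotientGroup.out_eq', QuotientGroup.out_eq'] at hab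
    have := eqv.symm.injective hab
    exact Fin.castLE_injective hcnq this
  set z : ↥K := s ⟨0, hcpos⟩ with hz
  refine ⟨fun a => ((z⁻¹ * s a : ↥K) : G), fun a => (z⁻¹ * s a).2, ?_, ?_⟩
  · intro a ha
    have : a = ⟨0, hcpos⟩ := Fin.ext ha
    subst this
    simp [hz]
  · intro a b hab
    have h1 : ((z⁻¹ * s a : ↥K) : G)⁻¹ * ((z⁻¹ * s b : ↥K) : G) = (((s a)⁻¹ * s b : ↥K) : G) := by
      push_cast
      group
    rw [h1] at hab
    have h2 : (s a)⁻¹ * s b ∈ H' := by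
      rw [hH', Subgroup.mem_subgroupOf]
      exact hab
    exact hsinj a b ((QuotientGroup.eq ).mpr h2)

theorem embed_exists {G : Type*} [Group G] [MetricSpace G] (Gs : ℕ → Subgroup G)
    (hmono : StrictMono Gs) (hfin : ∀ i : ℕ, (Gs i : Set G).Finite)
    (hdist : ∀ (k : ℕ) (x y : G), dist x y ≤ (k : ℝ) + 1 ↔ x⁻¹ * y ∈ Gs k)
    (X : Type*) [MetricSpace X] (hbg : BoundedGeometry X) (has : AsdimZero X) :
    ∃ f : X → G, CoarseEmbedding f := by
  classical
  cases isEmpty_or_nonempty X with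
  | inl hX =>
    exact ⟨fun _ => 1, fun R hR => ⟨1, one_pos, fun x => isEmptyElim x⟩,
      fun R hR => ⟨1, one_pos, fun x => isEmptyElim x⟩⟩
  | inr hX =>
  obtain ⟨x₀⟩ := hX
  obtain ⟨ε, hε, hNall⟩ := hbg
  -- the chain relations
  set Rel : ℕ → X → X → Prop :=
    fun n a b => Relation.ReflTransGen (fun u v => dist u v < ((n : ℕ) : ℝ)) a b with hRel
  have hRsymm : ∀ n : ℕ, ∀ x y : X, Rel n x y → Rel n y x := by
    intro n
    have hsym : Symmetric (fun u v : X => dist u v < ((n : ℕ) : ℝ)) := by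
      intro u v h; rwa [dist_comm]
    exact fun x y h => (haveI : Std.Symm (fun u v : X => dist u v < ((n : ℕ) : ℝ)) := ⟨fun _ _ h => hsym h⟩; Relation.ReflTransGen.stdSymm.symm x y h)
  have hRmono : ∀ {m n : ℕ}, m ≤ n → ∀ {x y : X}, Rel m x y → Rel n x y := by
    intro m n hmn x y h
    exact Relation.ReflTransGen.mono
      (fun u v hd => lt_of_lt_of_le hd (by exact_mod_cast hmn)) x y h
  have hRsingle : ∀ {n : ℕ} {x y : X}, dist x y < ((n : ℕ) : ℝ) → Rel n x y :=
    fun h => Relation.ReflTransGen.single h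
  -- base level
  set n₀ : ℕ := ⌈ε⌉₊ + 1 with hn₀
  have hεn₀ : ε ≤ (n₀ : ℝ) := by
    refine le_trans (Nat.le_ceil ε) ?_
    exact_mod_cast Nat.le_succ _
  -- diameter bounds
  have hBex : ∀ n : ℕ, ∃ b : ℝ, b > 0 ∧ ∀ x y : X, Rel (n₀ + n) x y → dist x y ≤ b := by
    intro n
    have hpos : (((n₀ + n : ℕ) : ℕ) : ℝ) > 0 := by
      have : (0 : ℕ) < n₀ + n := by omega
      exact_mod_cast this
    exact has _ hpos
  choose B hBpos hBle using hBex
  -- counting bounds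
  have hNex : ∀ n : ℕ, ∃ Nb : ℕ, ∀ (x : X) (F : Finset X),
      (↑F ⊆ Metric.ball x (B n + 1)) →
      (∀ p ∈ F, ∀ q ∈ F, p ≠ q → ε ≤ dist p q) → F.card ≤ Nb :=
    fun n => hNall _ (by have := hBpos n; linarith)
  choose Nv hNv using hNex
  -- representatives
  set sd : Setoid X := ⟨Rel n₀,
    ⟨fun x => Relation.ReflTransGen.refl,
     fun {x y} h => hRsymm _ _ _ h,
     fun {x y z} h1 h2 => Relation.ReflTransGen.trans h1 h2⟩⟩ with hsd
  set rep : X → X := fun x => (Quotient.mk sd x).out with hrep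
  have hrep_rel : ∀ x : X, Rel n₀ x (rep x) := by
    intro x
    have h := Quotient.exact (Quotient.out_eq (Quotient.mk sd x))
    exact hRsymm _ _ _ h
  have hrep_eq : ∀ {x y : X}, Rel n₀ x y → rep x = rep y := by
    intro x y h
    exact congrArg Quotient.out (Quotient.sound h)
  have hrep_idem : ∀ x : X, rep (rep x) = rep x :=
    fun x => hrep_eq (hRsymm _ _ _ (hrep_rel x))
  set S : Set X := Set.range rep with hS
  have hSsep : ∀ s ∈ S, ∀ t ∈ S, s ≠ t → ¬ Rel n₀ s t := by
    rintro s ⟨a, rfl⟩ t ⟨b, rfl⟩ hne hrel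
    exact hne (by rw [← hrep_idem a, ← hrep_idem b]; exact hrep_eq hrel)
  have hSdist : ∀ s ∈ S, ∀ t ∈ S, s ≠ t → ε ≤ dist s t := by
    intro s hs t ht hne
    by_contra hlt
    push_neg at hlt
    exact hSsep s hs t ht hne (hRsingle (lt_of_lt_of_le hlt hεn₀))
  -- the classes
  set Cl : ℕ → X → Set X := fun n x => {s | s ∈ S ∧ Rel (n₀ + n) x s} with hCl
  have hrep_mem : ∀ (n : ℕ) (x : X), rep x ∈ Cl n x :=
    fun n x => ⟨Set.mem_range_self x, hRmono (Nat.le_add_right n₀ n) (hrep_rel x)⟩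
  have hClsub : ∀ (n : ℕ) (x : X), Cl n x ⊆ Cl (n + 1) x := by
    rintro n x s ⟨hsS, hrel⟩
    exact ⟨hsS, hRmono (by omega) hrel⟩
  have hClcard : ∀ (n : ℕ) (x : X), (Cl n x).Finite ∧ (Cl n x).ncard ≤ Nv n := by
    intro n x
    apply finite_and_ncard_le
    intro F hF
    apply hNv n x F
    · intro s hsF
      obtain ⟨hsS, hrel⟩ := hF hsF
      have := hBle n x s hrel
      have h2 := hBpos n
      rw [Metric.mem_ball, dist_comm]
      linarith
    · intro p hp q hq hne
      exact hSdist p (hF hp).1 q (hF hq).1 hne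
  have hCleq : ∀ {n : ℕ} {x y : X}, Rel (n₀ + n) x y → Cl n x = Cl n y := by
    intro n x y h
    ext s
    constructor
    · rintro ⟨hsS, hrel⟩; exact ⟨hsS, Relation.ReflTransGen.trans (hRsymm _ _ _ h) hrel⟩
    · rintro ⟨hsS, hrel⟩; exact ⟨hsS, Relation.ReflTransGen.trans h hrel⟩
  -- countability and encoding
  have hScnt : S.Countable := by
    have hsub : S ⊆ ⋃ n : ℕ, Cl n x₀ := by
      intro s hs
      have hlt : dist x₀ s < ((n₀ + (⌈dist x₀ s⌉₊ + 1) : ℕ) : ℝ) := by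
        have h1 : dist x₀ s ≤ (⌈dist x₀ s⌉₊ : ℝ) := Nat.le_ceil _
        have h2 : ((⌈dist x₀ s⌉₊ : ℕ) : ℝ) < ((n₀ + (⌈dist x₀ s⌉₊ + 1) : ℕ) : ℝ) := by
          exact_mod_cast (by omega : ⌈dist x₀ s⌉₊ < n₀ + (⌈dist x₀ s⌉₊ + 1))
        linarith
      exact Set.mem_iUnion.mpr ⟨⌈dist x₀ s⌉₊ + 1, hs, hRsingle hlt⟩
    exact Set.Countable.mono hsub
      (Set.countable_iUnion fun n => ((hClcard n x₀).1).countable)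
  obtain ⟨enc0, henc0⟩ := Set.countable_iff_exists_injective.mp hScnt
  set encode : X → ℕ := fun x => if h : x ∈ S then enc0 ⟨x, h⟩ else 0 with hencode
  have hencinj : ∀ s ∈ S, ∀ t ∈ S, encode s = encode t → s = t := by
    intro s hs t ht hst
    simp only [hencode, dif_pos hs, dif_pos ht] at hst
    exact Subtype.ext_iff.mp (henc0 hst)
  -- minimal index
  set ix : ℕ → X → ℕ := fun n x => sInf (encode '' Cl n x) with hix
  have hixmem : ∀ (n : ℕ) (x : X), ix n x ∈ encode '' Cl n x :=
    fun n x => Nat.sInf_mem ⟨_, Set.mem_image_of_mem _ (hrep_mem n x)⟩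
  have hixle : ∀ {n : ℕ} {x a : X}, a ∈ Cl n x → ix n x ≤ encode a :=
    fun h => Nat.sInf_le (Set.mem_image_of_mem _ h)
  have hixanti : ∀ (n : ℕ) (x : X), ix (n + 1) x ≤ ix n x := by
    intro n x
    obtain ⟨a, ha, hae⟩ := hixmem n x
    rw [← hae]
    exact hixle (hClsub n x ha)
  have hixcl : ∀ {n : ℕ} {x y : X}, Rel (n₀ + n) x y → ix n x = ix n y := by
    intro n x y h
    simp only [hix]
    rw [hCleq h]
  have hix_of_mem : ∀ {n : ℕ} {x s : X}, s ∈ Cl n x → ix n s = ix n x :=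
    fun h => hixcl (hRsymm _ _ _ h.2)
  -- the value sets and ranks
  set V : ℕ → X → Set ℕ := fun n x => (fun s => ix n s) '' Cl (n + 1) x with hV
  have hVfin : ∀ (n : ℕ) (x : X), (V n x).Finite :=
    fun n x => ((hClcard (n + 1) x).1).image _
  have hixV : ∀ (n : ℕ) (x : X), ix n x ∈ V n x :=
    fun n x => ⟨rep x, hrep_mem (n + 1) x, hix_of_mem (hrep_mem n x)⟩
  set q : ℕ → X → ℕ := fun n x => {v ∈ V n x | v < ix n x}.ncard with hq
  have hqlt : ∀ (n : ℕ) (x : X), q n x < Nv (n + 1) := by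
    intro n x
    have h1 : {v ∈ V n x | v < ix n x} ⊂ V n x := by
      constructor
      · exact Set.sep_subset _ _
      · intro hsub
        exact lt_irrefl (ix n x) (hsub (hixV n x)).2
    calc q n x < (V n x).ncard := Set.ncard_lt_ncard h1 (hVfin n x)
      _ ≤ (Cl (n + 1) x).ncard := Set.ncard_image_le ((hClcard (n + 1) x).1)
      _ ≤ Nv (n + 1) := (hClcard (n + 1) x).2
  have hqeq : ∀ {n : ℕ} {x y : X}, Rel (n₀ + n) x y → ∀ m, n ≤ m → q m x = q m y := by
    intro n x y h m hm
    have h1 : ix m x = ix m y := hixcl (hRmono (by omega) h)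
    have h2 : V m x = V m y := by
      simp only [hV]
      rw [hCleq (hRmono (by omega) h)]
    simp only [hq]
    rw [h1, h2]
  have hqstab : ∀ x : X, ∃ Nx : ℕ, ∀ m, Nx ≤ m → q m x = 0 := by
    intro x
    obtain ⟨Nx, hNx⟩ := nat_antitone_stab (fun n => ix n x) (fun n => hixanti n x)
    refine ⟨Nx, fun m hm => ?_⟩
    have hes : {v ∈ V m x | v < ix m x} = ∅ := by
      ext v
      simp only [Set.mem_setOf_eq, Set.mem_empty_iff_false, iff_false, not_and]
      rintro ⟨s, hs, rfl⟩ hlt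
      have h0 : ix m s < ix m x := hlt
      have h1 : ix (m + 1) s ≤ ix m s := hixanti m s
      have h2 : ix (m + 1) s = ix (m + 1) x := hix_of_mem hs
      have h3 : ix (m + 1) x = ix Nx x := hNx (m + 1) (by omega)
      have h4 : ix m x = ix Nx x := hNx m hm
      omega
    simp only [hq]
    rw [hes]
    exact Set.ncard_empty _
  have hqne : ∀ {n : ℕ} {x y : X}, ¬ Rel (n₀ + n) x y →
      ∃ j, n ≤ j ∧ Rel (n₀ + (j + 1)) x y ∧ q j x ≠ q j y := by
    intro n x y hnot
    have hex : ∃ k : ℕ, Rel (n₀ + k) x y := by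
      refine ⟨⌈dist x y⌉₊ + 1, hRsingle ?_⟩
      have h1 : dist x y ≤ (⌈dist x y⌉₊ : ℝ) := Nat.le_ceil _
      have h2 : ((⌈dist x y⌉₊ : ℕ) : ℝ) < ((n₀ + (⌈dist x y⌉₊ + 1) : ℕ) : ℝ) := by
        exact_mod_cast (by omega : ⌈dist x y⌉₊ < n₀ + (⌈dist x y⌉₊ + 1))
      linarith
    have hk₀ : Rel (n₀ + Nat.find hex) x y := Nat.find_spec hex
    have hgt : n < Nat.find hex := by
      by_contra hle
      push_neg at hle
      exact hnot (hRmono (by omega) hk₀)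
    set j : ℕ := Nat.find hex - 1 with hj
    have hj1 : j + 1 = Nat.find hex := by omega
    have hnj : ¬ Rel (n₀ + j) x y := Nat.find_min hex (by omega)
    have hrel1 : Rel (n₀ + (j + 1)) x y := by rw [hj1]; exact hk₀
    have hCl1 : Cl (j + 1) x = Cl (j + 1) y := hCleq hrel1
    have hV1 : V j x = V j y := by
      simp only [hV]
      rw [hCl1]
    have hixne : ix j x ≠ ix j y := by
      obtain ⟨a, ha, hae⟩ := hixmem j x
      obtain ⟨b, hb, hbe⟩ := hixmem j y
      intro he
      have hab : a = b := hencinj a ha.1 b hb.1 (by rw [hae, hbe, he])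
      subst hab
      exact hnj (Relation.ReflTransGen.trans ha.2 (hRsymm _ _ _ hb.2))
    have hixxV : ix j x ∈ V j x := hixV j x
    have hixyV : ix j y ∈ V j x := by rw [hV1]; exact hixV j y
    refine ⟨j, by omega, hrel1, ?_⟩
    simp only [hq]
    rw [hV1]
    rcases lt_or_gt_of_ne hixne with h | h
    · exact ne_of_lt (count_lt_strict (V j y) (by rw [← hV1]; exact hVfin j x)
        (by rw [← hV1]; exact hixxV) (by rw [← hV1]; exact hixyV) h)
    · exact (ne_of_lt (count_lt_strict (V j y) (by rw [← hV1]; exact hVfin j x)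
        (by rw [← hV1]; exact hixyV) (by rw [← hV1]; exact hixxV) h)).symm
  -- group side: cardinalities
  have hFinG : ∀ i : ℕ, Finite (Gs i) := fun i => (hfin i).to_subtype
  have hcardpos : ∀ i : ℕ, 0 < Nat.card (Gs i) := by
    intro i
    haveI := hFinG i
    exact Nat.card_pos
  have hcard_lt : ∀ i : ℕ, Nat.card (Gs i) < Nat.card (Gs (i + 1)) := by
    intro i
    rw [cards_eq, cards_eq]
    apply Set.ncard_lt_ncard _ (hfin (i + 1))
    exact SetLike.coe_ssubset_coe.mpr (hmono (Nat.lt_succ_self i))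
  have hcard_ge : ∀ i : ℕ, i ≤ Nat.card (Gs i) := by
    have hsm : StrictMono (fun i => Nat.card (Gs i)) := strictMono_nat_of_lt_succ hcard_lt
    exact fun i => hsm.le_apply
  -- the tower of levels
  set F : ℕ → ℕ := fun n => Nv (n + 1) with hF
  have hFpos : ∀ n : ℕ, 0 < F n := fun n => lt_of_le_of_lt (Nat.zero_le _) (hqlt n x₀)
  set mm : ℕ → X → ℕ := fun n _ => 0 with hmmX -- dummy, will not use
  clear hmmX mm
  set mm : ℕ → ℕ := fun n => Nat.rec 0 (fun k ih => F k * Nat.card (Gs ih) + ih) n with hmm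
  have hmm0 : mm 0 = 0 := rfl
  have hmms : ∀ n : ℕ, mm (n + 1) = F n * Nat.card (Gs (mm n)) + mm n := fun n => rfl
  have hmmle : ∀ n : ℕ, mm n ≤ mm (n + 1) := by
    intro n
    rw [hmms]
    omega
  have hmmmono : Monotone mm := monotone_nat_of_le_succ hmmle
  have hmmge : ∀ n : ℕ, n ≤ mm n := by
    intro n
    induction n with
    | zero => omega
    | succ k ih =>
      have h1 : 0 < F k * Nat.card (Gs (mm k)) := Nat.mul_pos (hFpos k) (hcardpos (mm k))
      rw [hmms]
      omega
  have hGmm : ∀ {i j : ℕ}, i ≤ j → Gs (mm i) ≤ Gs (mm j) :=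
    fun hij => hmono.monotone (hmmmono hij)
  -- coset representatives
  have hrex : ∀ n : ℕ, ∃ t : Fin (F n) → G, (∀ a, t a ∈ Gs (mm (n + 1))) ∧
      (∀ a : Fin (F n), (a : ℕ) = 0 → t a = 1) ∧
      (∀ a b : Fin (F n), (t a)⁻¹ * t b ∈ Gs (mm n) → a = b) := by
    intro n
    apply exists_coset_reps (Gs (mm n)) (Gs (mm (n + 1))) (hGmm (Nat.le_succ n))
      (hfin _) (F n)
    calc F n * Nat.card (Gs (mm n)) ≤ mm (n + 1) := by rw [hmms]; omega
      _ ≤ Nat.card (Gs (mm (n + 1))) := hcard_ge _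
  choose rr hrmem hrzero hrinj using hrex
  -- the partial products
  set g : ℕ → X → G := fun n => Nat.rec (motive := fun _ => X → G) (fun _ => 1)
    (fun k ih x => rr k ⟨q k x, hqlt k x⟩ * ih x) n with hg
  have hg0 : ∀ x : X, g 0 x = 1 := fun _ => rfl
  have hgs : ∀ (n : ℕ) (x : X), g (n + 1) x = rr n ⟨q n x, hqlt n x⟩ * g n x :=
    fun n x => rfl
  have hgmem : ∀ (n : ℕ) (x : X), g n x ∈ Gs (mm n) := by
    intro n x
    induction n with
    | zero => rw [hg0]; exact one_mem _
    | succ k ih =>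
      rw [hgs]
      exact mul_mem (hrmem k _) (hGmm (Nat.le_succ k) ih)
  have hgshift : ∀ (n : ℕ) (x y : X) (M : ℕ), n ≤ M →
      (∀ m, n ≤ m → m < M → q m x = q m y) →
      g M x * (g n x)⁻¹ = g M y * (g n y)⁻¹ := by
    intro n x y M hnM
    induction M, hnM using Nat.le_induction with
    | base => intro _; simp
    | succ M hM ih =>
      intro hq'
      have hqM : q M x = q M y := hq' M hM (by omega)
      have hFinEq : (⟨q M x, hqlt M x⟩ : Fin (F M)) = ⟨q M y, hqlt M y⟩ := Fin.ext hqM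
      have ih' := ih (fun m h1 h2 => hq' m h1 (by omega))
      rw [hgs, hgs, mul_assoc, mul_assoc, ih', hFinEq]
  -- final map
  choose NX hNX using hqstab
  set f : X → G := fun x => g (NX x) x with hf
  have hfg : ∀ (x : X) (M : ℕ), NX x ≤ M → g M x = f x := by
    intro x M hM
    induction M, hM using Nat.le_induction with
    | base => rfl
    | succ M hM ih =>
      rw [hgs]
      have h0 : ((⟨q M x, hqlt M x⟩ : Fin (F M)) : ℕ) = 0 := hNX x M hM
      rw [hrzero M _ h0, one_mul, ih]
  -- the key equivalence
  have hkey : ∀ (n : ℕ) (x y : X), ((f x)⁻¹ * f y ∈ Gs (mm n)) ↔ Rel (n₀ + n) x y := by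
    intro n x y
    constructor
    · intro hmem
      by_contra hnot
      obtain ⟨j, hjn, hrel1, hqj⟩ := hqne hnot
      set M : ℕ := max (max (NX x) (NX y)) (j + 1) with hM
      have hfx : g M x = f x := hfg x M (le_trans (le_max_left _ _) (le_max_left _ _))
      have hfy : g M y = f y := hfg y M (le_trans (le_max_right _ _) (le_max_left _ _))
      have hagree : ∀ m, j + 1 ≤ m → m < M → q m x = q m y :=
        fun m hm _ => hqeq hrel1 m hm
      have hsh := hgshift (j + 1) x y M (le_max_right _ _) hagree
      have e : (f x)⁻¹ * f y = (g (j + 1) x)⁻¹ * g (j + 1) y := by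
        rw [← hfx, ← hfy]
        have h2 : g M y = g M x * (g (j + 1) x)⁻¹ * g (j + 1) y := by
          rw [hsh]; group
        rw [h2]; group
      rw [e] at hmem
      have hmem' : (g (j + 1) x)⁻¹ * g (j + 1) y ∈ Gs (mm j) := hGmm hjn hmem
      have hw : (rr j ⟨q j x, hqlt j x⟩)⁻¹ * rr j ⟨q j y, hqlt j y⟩ ∈ Gs (mm j) := by
        have expand : (rr j ⟨q j x, hqlt j x⟩)⁻¹ * rr j ⟨q j y, hqlt j y⟩ =
            g j x * ((g (j + 1) x)⁻¹ * g (j + 1) y) * (g j y)⁻¹ := by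
          rw [hgs, hgs]; group
        rw [expand]
        exact mul_mem (mul_mem (hgmem j x) hmem') (inv_mem (hgmem j y))
      have := hrinj j _ _ hw
      exact hqj (by simpa using congrArg Fin.val this)
    · intro hrel
      set M : ℕ := max (max (NX x) (NX y)) n with hM
      have hfx : g M x = f x := hfg x M (le_trans (le_max_left _ _) (le_max_left _ _))
      have hfy : g M y = f y := hfg y M (le_trans (le_max_right _ _) (le_max_left _ _))
      have hagree : ∀ m, n ≤ m → m < M → q m x = q m y :=
        fun m hm _ => hqeq hrel m hm
      have hsh := hgshift n x y M (le_max_right _ _) hagree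
      have e : (f x)⁻¹ * f y = (g n x)⁻¹ * g n y := by
        rw [← hfx, ← hfy]
        have h2 : g M y = g M x * (g n x)⁻¹ * g n y := by
          rw [hsh]; group
        rw [h2]; group
      rw [e]
      exact mul_mem (inv_mem (hgmem n x)) (hgmem n y)
  -- conclusion
  refine ⟨f, ?_, ?_⟩
  · intro R hR
    set n : ℕ := ⌈R⌉₊ + 1 with hn
    refine ⟨(mm n : ℝ) + 1, by positivity, fun x y hxy => ?_⟩
    have hrel : Rel (n₀ + n) x y := by
      apply hRsingle
      have h1 : R ≤ (⌈R⌉₊ : ℝ) := Nat.le_ceil R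
      have h2 : ((⌈R⌉₊ : ℕ) : ℝ) < ((n₀ + n : ℕ) : ℝ) := by
        exact_mod_cast (by omega : ⌈R⌉₊ < n₀ + n)
      linarith
    exact (hdist (mm n) (f x) (f y)).mpr ((hkey n x y).mpr hrel)
  · intro R hR
    set n : ℕ := ⌈R⌉₊ with hn
    refine ⟨B n, hBpos n, fun x y hxy => ?_⟩
    have h1 : dist (f x) (f y) ≤ (mm n : ℝ) + 1 := by
      have h2 : R ≤ (⌈R⌉₊ : ℝ) := Nat.le_ceil R
      have h3 : ((n : ℕ) : ℝ) ≤ ((mm n : ℕ) : ℝ) := by exact_mod_cast hmmge n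
      linarith
    exact hBle n x y ((hkey n x y).mp ((hdist (mm n) _ _).mp h1))

/-- Theorem 6.9: if `G` is a countable group that is the union of a strictly increasing
sequence of finite subgroups `Gs i`, then `G` carries a proper left-invariant integral
ultrametric making it a universal space in the category of metric spaces of bounded geometry
of asymptotic dimension `0`. -/
theorem universal_group_for_bounded_geometry_asdim_zero {G : Type*} [Group G] [Countable G]
    (Gs : ℕ → Subgroup G) (hmono : StrictMono Gs)
    (hfin : ∀ i : ℕ, (Gs i : Set G).Finite)
    (hunion : ∀ g : G, ∃ i : ℕ, g ∈ Gs i) :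
    ∃ _ : MetricSpace G, LeftInvariantDist G ∧ IsUltra G ∧ IsIntegralDist G ∧
      ProperSpace G ∧
      ∀ (X : Type u) (_ : MetricSpace X), BoundedGeometry X →
        AsdimZero X → ∃ f : X → G, CoarseEmbedding f := by
  classical
  set ℓ : G → ℕ := fun g => Nat.find (hunion g) with hℓ
  have hℓ_mem : ∀ g, g ∈ Gs (ℓ g) := fun g => Nat.find_spec (hunion g)
  have hℓ_le : ∀ g k, g ∈ Gs k → ℓ g ≤ k := fun g k h => Nat.find_le h
  have hℓ_iff : ∀ g k, ℓ g ≤ k ↔ g ∈ Gs k :=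
    fun g k => ⟨fun h => hmono.monotone h (hℓ_mem g), hℓ_le g k⟩
  set D : G → G → ℝ := fun x y => if x = y then 0 else (ℓ (x⁻¹*y) : ℝ) + 1 with hD
  have hDnonneg : ∀ x y, 0 ≤ D x y := by
    intro x y; simp only [hD]; split <;> positivity
  have hDcomm : ∀ x y, D x y = D y x := by
    intro x y
    by_cases h : x = y
    · subst h; rfl
    · have heq : (x⁻¹*y)⁻¹ = y⁻¹*x := by group
      have hinv : ℓ (y⁻¹*x) = ℓ (x⁻¹*y) := by
        apply le_antisymm
        · exact hℓ_le _ _ (heq ▸ inv_mem (hℓ_mem (x⁻¹*y)))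
        · apply hℓ_le
          have h2 := inv_mem (hℓ_mem (y⁻¹*x))
          rwa [show (y⁻¹*x)⁻¹ = x⁻¹*y by group] at h2
      simp only [hD, if_neg h, if_neg (Ne.symm h), hinv]
  have hUltra : ∀ x y z, D x z ≤ max (D x y) (D y z) := by
    intro x y z
    by_cases hxz : x = z
    · subst hxz; simp only [hD, if_pos rfl]
      exact le_max_of_le_left (hDnonneg x y)
    by_cases hxy : x = y
    · subst hxy; exact le_max_right _ _
    by_cases hyz : y = z
    · subst hyz; exact le_max_left _ _
    simp only [hD, if_neg hxz, if_neg hxy, if_neg hyz]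
    have hmem : x⁻¹*z ∈ Gs (max (ℓ (x⁻¹*y)) (ℓ (y⁻¹*z))) := by
      have h1 : x⁻¹*y ∈ Gs (max (ℓ (x⁻¹*y)) (ℓ (y⁻¹*z))) :=
        hmono.monotone (le_max_left _ _) (hℓ_mem _)
      have h2 : y⁻¹*z ∈ Gs (max (ℓ (x⁻¹*y)) (ℓ (y⁻¹*z))) :=
        hmono.monotone (le_max_right _ _) (hℓ_mem _)
      have h3 := mul_mem h1 h2
      rwa [show x⁻¹*y*(y⁻¹*z) = x⁻¹*z by group] at h3
    have hle := hℓ_le _ _ hmem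
    rcases le_max_iff.mp hle with h' | h'
    · refine le_max_of_le_left ?_
      have h'' : (ℓ (x⁻¹*z):ℝ) ≤ (ℓ (x⁻¹*y):ℝ) := by exact_mod_cast h'
      linarith
    · refine le_max_of_le_right ?_
      have h'' : (ℓ (x⁻¹*z):ℝ) ≤ (ℓ (y⁻¹*z):ℝ) := by exact_mod_cast h'
      linarith
  letI dG : MetricSpace G := {
    dist := D
    dist_self := fun x => if_pos rfl
    dist_comm := hDcomm
    dist_triangle := fun x y z => le_trans (hUltra x y z)
      (max_le (le_add_of_nonneg_right (hDnonneg y z)) (le_add_of_nonneg_left (hDnonneg x y)))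
    eq_of_dist_eq_zero := by
      intro x y h
      by_contra hne
      simp only [hD, if_neg hne] at h
      have : (0:ℝ) ≤ (ℓ (x⁻¹*y) : ℝ) := Nat.cast_nonneg _
      linarith }
  have hdist_def : ∀ x y : G, dist x y = D x y := fun x y => rfl
  have hdist_iff : ∀ (k : ℕ) (x y : G), dist x y ≤ (k : ℝ) + 1 ↔ x⁻¹ * y ∈ Gs k := by
    intro k x y
    rw [hdist_def]
    by_cases h : x = y
    · subst h
      simp only [hD, if_pos rfl, inv_mul_cancel]
      constructor
      · intro _; exact one_mem _
      · intro _; positivity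
    · simp only [hD, if_neg h]
      rw [← hℓ_iff]
      constructor
      · intro hle
        have : (ℓ (x⁻¹*y) : ℝ) ≤ (k : ℝ) := by linarith
        exact_mod_cast this
      · intro hle
        have : (ℓ (x⁻¹*y) : ℝ) ≤ (k : ℝ) := by exact_mod_cast hle
        linarith
  refine ⟨dG, ?_, ?_, ?_, ?_, ?_⟩
  · -- left invariance
    intro g x y
    rw [hdist_def, hdist_def]
    simp only [hD, mul_right_inj]
    rw [show (g*x)⁻¹*(g*y) = x⁻¹*y by group]
  · -- ultrametric
    intro x y z
    rw [hdist_def, hdist_def, hdist_def]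
    exact hUltra x y z
  · -- integral distances
    intro x y
    rw [hdist_def]
    by_cases h : x = y
    · exact ⟨0, by simp [hD, h]⟩
    · exact ⟨ℓ (x⁻¹*y) + 1, by simp [hD, if_neg h]⟩
  · -- properness
    refine ⟨fun x r => ?_⟩
    have hsub : Metric.closedBall x r ⊆ insert x ((fun h => x * h) '' (Gs ⌈r⌉₊ : Set G)) := by
      intro y hy
      rw [Metric.mem_closedBall, dist_comm, hdist_def] at hy
      by_cases h : x = y
      · exact h ▸ Set.mem_insert _ _
      · right
        simp only [hD, if_neg h] at hy
        have h1 : (ℓ (x⁻¹*y) : ℝ) ≤ r := by linarith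
        have h2 : (ℓ (x⁻¹*y) : ℝ) ≤ (⌈r⌉₊ : ℝ) := le_trans h1 (Nat.le_ceil r)
        have h3 : ℓ (x⁻¹*y) ≤ ⌈r⌉₊ := by exact_mod_cast h2
        exact ⟨x⁻¹*y, (hℓ_iff _ _).mp h3, by group⟩
    exact (((hfin ⌈r⌉₊).image _).insert x).subset hsub |>.isCompact
  · -- universality
    intro X instX hbg has
    exact embed_exists Gs hmono hfin hdist_iff X hbg has
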